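/- Let m, l be positive integers, k := m·l, σ > 0, n ≥ 1, and let N = (N_1, …, N_n) be a multi-index of nonnegative integers with |N| = N_1 + ⋯ + N_n. Define f : ℝⁿ × ℝ → ℂ by f(y,t) := e^{k‖y‖²/2} · ((∂/∂y_1)^{N_1} ⋯ (∂/∂y_n)^{N_n} (e^{−k‖y‖²}))(y) · e^{−√(−1)·l·t}. Then f satisfies −Σ_{i=1}^{n} ∂²f/∂y_i² − (m²(1 + σ‖y‖²)/σ) · ∂²f/∂t² = (k²/σ + k·n + 2k·|N|) · f pointwise on ℝⁿ × ℝ. -/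

import Mathlib

/-- The partial derivative `∂g/∂y_i` of a function `g : ℝⁿ → ℝ`. -/
noncomputable def partialDeriv' {n : ℕ} (i : Fin n) (g : (Fin n → ℝ) → ℝ) :
    (Fin n → ℝ) → ℝ :=
  fun y => fderiv ℝ g y (Pi.single i 1)

/-- The multi-index derivative `(∂/∂y_1)^{N_1} ⋯ (∂/∂y_n)^{N_n} g`. -/
noncomputable def multiIndexDeriv {n : ℕ} (N : Fin n → ℕ) (g : (Fin n → ℝ) → ℝ) :
    (Fin n → ℝ) → ℝ :=
  (List.finRange n).foldr (fun i h => (partialDeriv' i)^[N i] h) g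

/-- The partial derivative `∂f/∂y_i` of a function `f : ℝⁿ × ℝ → ℂ`. -/
noncomputable def pderivY {n : ℕ} (i : Fin n) (f : (Fin n → ℝ) × ℝ → ℂ) :
    (Fin n → ℝ) × ℝ → ℂ :=
  fun p => fderiv ℝ f p ((Pi.single i 1 : Fin n → ℝ), 0)

/-- The partial derivative `∂f/∂t` of a function `f : ℝⁿ × ℝ → ℂ`. -/
noncomputable def pderivT {n : ℕ} (f : (Fin n → ℝ) × ℝ → ℂ) :
    (Fin n → ℝ) × ℝ → ℂ :=
  fun p => fderiv ℝ f p ((0 : Fin n → ℝ), 1)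


noncomputable def uH (k : ℝ) (N : ℕ) : ℝ → ℝ :=
  deriv^[N] (fun x => Real.exp (-(k * x ^ 2)))

lemma g0_smooth (k : ℝ) : ContDiff ℝ ((⊤:ℕ∞)) (fun x : ℝ => Real.exp (-(k * x ^ 2))) := by
  apply Real.contDiff_exp.comp
  fun_prop

lemma uH_smooth (k : ℝ) (N : ℕ) : ContDiff ℝ ((⊤:ℕ∞)) (uH k N) :=
  ContDiff.iterate_deriv N (g0_smooth k)

lemma uH_deriv (k : ℝ) (N : ℕ) : deriv (uH k N) = uH k (N + 1) := by
  simp [uH, Function.iterate_succ_apply']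

lemma uH_one (k : ℝ) (x : ℝ) : uH k 1 x = -(2 * k) * x * uH k 0 x := by
  have h : HasDerivAt (fun x : ℝ => Real.exp (-(k * x ^ 2))) (-(2 * k) * x * Real.exp (-(k * x ^ 2))) x := by
    have h1 : HasDerivAt (fun x : ℝ => -(k * x ^ 2)) (-(2 * k) * x) x := by
      have := ((hasDerivAt_pow 2 x).const_mul k).neg
      exact this.congr_deriv (by ring)
    have := (Real.hasDerivAt_exp _).comp x h1
    exact this.congr_deriv (by ring)
  have : uH k 1 x = deriv (fun x : ℝ => Real.exp (-(k * x ^ 2))) x := rfl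
  rw [this, h.deriv]; rfl

lemma uH_diff (k : ℝ) (N : ℕ) (x : ℝ) : DifferentiableAt ℝ (uH k N) x :=
  ((uH_smooth k N).differentiable (by simp)).differentiableAt

lemma uH_hasDerivAt (k : ℝ) (N : ℕ) (x : ℝ) : HasDerivAt (uH k N) (uH k (N+1) x) x := by
  have := (uH_diff k N x).hasDerivAt
  rwa [uH_deriv] at this

lemma uH_rec (k : ℝ) (N : ℕ) (x : ℝ) :
    uH k (N + 2) x = -(2 * k) * x * uH k (N + 1) x - 2 * k * (N + 1) * uH k N x := by
  induction N generalizing x with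
  | zero =>
    have h1 : uH k 1 = fun x => -(2 * k) * x * uH k 0 x := funext (uH_one k)
    have h2 : HasDerivAt (fun x => -(2 * k) * x * uH k 0 x)
        (-(2 * k) * uH k 0 x + -(2 * k) * x * uH k 1 x) x := by
      have := ((hasDerivAt_id x).const_mul (-(2*k))).mul (uH_hasDerivAt k 0 x)
      exact this.congr_deriv (by simp only [id_eq]; ring)
    have h3 : uH k 2 x = deriv (uH k 1) x := by rw [uH_deriv]
    have h4 : deriv (uH k 1) x = -(2 * k) * uH k 0 x + -(2 * k) * x * uH k 1 x := by
      conv_lhs => rw [h1]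
      exact h2.deriv
    rw [h3, h4]; push_cast; ring
  | succ M ih =>
    have h1 : uH k (M + 2) = fun x => -(2 * k) * x * uH k (M + 1) x - 2 * k * (M + 1) * uH k M x :=
      funext ih
    have h2 : HasDerivAt (fun x => -(2 * k) * x * uH k (M + 1) x - 2 * k * (M + 1) * uH k M x)
        ((-(2 * k) * uH k (M+1) x + -(2 * k) * x * uH k (M + 2) x) - 2 * k * (M + 1) * uH k (M+1) x) x := by
      have := (((hasDerivAt_id x).const_mul (-(2*k))).mul (uH_hasDerivAt k (M+1) x)).sub
        ((uH_hasDerivAt k M x).const_mul (2 * k * (M+1)))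
      exact this.congr_deriv (by simp only [id_eq]; ring)
    have h3 : uH k (M + 3) x = deriv (uH k (M + 2)) x := by rw [uH_deriv]
    have := h3
    rw [h1, h2.deriv] at this
    rw [show M + 1 + 2 = M + 3 from rfl, this]
    push_cast; ring

noncomputable def phiH (k : ℝ) (N : ℕ) : ℝ → ℝ :=
  fun x => Real.exp (k * x ^ 2 / 2) * uH k N x

lemma phiH_smooth (k : ℝ) (N : ℕ) : ContDiff ℝ ((⊤:ℕ∞)) (phiH k N) := by
  apply ContDiff.mul _ (uH_smooth k N)
  exact Real.contDiff_exp.comp ((contDiff_const.mul (contDiff_id.pow 2)).div_const 2)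

lemma exp_half_hasDerivAt (k x : ℝ) :
    HasDerivAt (fun x : ℝ => Real.exp (k * x ^ 2 / 2)) (k * x * Real.exp (k * x ^ 2 / 2)) x := by
  have h1 : HasDerivAt (fun x : ℝ => k * x ^ 2 / 2) (k * x) x := by
    have := ((hasDerivAt_pow 2 x).const_mul k).div_const 2
    exact this.congr_deriv (by push_cast; ring)
  have := (Real.hasDerivAt_exp _).comp x h1
  exact this.congr_deriv (by ring)

lemma phiH_hasDerivAt (k : ℝ) (N : ℕ) (x : ℝ) :
    HasDerivAt (phiH k N)
      (k * x * phiH k N x + Real.exp (k * x ^ 2 / 2) * uH k (N+1) x) x := by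
  have := (exp_half_hasDerivAt k x).mul (uH_hasDerivAt k N x)
  exact this.congr_deriv (by simp only [phiH]; ring)

lemma phiH_deriv (k : ℝ) (N : ℕ) :
    deriv (phiH k N) = fun x => k * x * phiH k N x + Real.exp (k * x ^ 2 / 2) * uH k (N+1) x :=
  funext fun x => (phiH_hasDerivAt k N x).deriv

lemma phiH_deriv2 (k : ℝ) (N : ℕ) (x : ℝ) :
    deriv (deriv (phiH k N)) x = (k ^ 2 * x ^ 2 - k * (2 * N + 1)) * phiH k N x := by
  rw [phiH_deriv]
  have h2 : HasDerivAt (fun x => k * x * phiH k N x + Real.exp (k * x ^ 2 / 2) * uH k (N+1) x)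
      ((k * phiH k N x + k * x * (k * x * phiH k N x + Real.exp (k * x ^ 2 / 2) * uH k (N+1) x))
        + (k * x * Real.exp (k * x ^ 2 / 2) * uH k (N+1) x + Real.exp (k * x ^ 2 / 2) * uH k (N+2) x)) x := by
    have := (((hasDerivAt_id x).const_mul k).mul (phiH_hasDerivAt k N x)).add
      ((exp_half_hasDerivAt k x).mul (uH_hasDerivAt k (N+1) x))
    exact this.congr_deriv (by simp only [id_eq]; ring)
  rw [h2.deriv, uH_rec k N x]
  simp only [phiH]; ring
lemma hasFDerivAt_coord (n : ℕ) (j : Fin n) (w : ℝ → ℝ) {x : Fin n → ℝ}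
    (hw : DifferentiableAt ℝ w (x j)) :
    HasFDerivAt (fun y : Fin n → ℝ => w (y j))
      ((ContinuousLinearMap.smulRight (1 : ℝ →L[ℝ] ℝ) (deriv w (x j))).comp
        (ContinuousLinearMap.proj j)) x :=
  (hw.hasDerivAt.hasFDerivAt).comp x (hasFDerivAt_apply j x)

lemma hasFDerivAt_pi_prod {n : ℕ} (v : Fin n → ℝ → ℝ)
    (hv : ∀ j, ContDiff ℝ ((⊤:ℕ∞)) (v j)) (y : Fin n → ℝ) :
    HasFDerivAt (fun y : Fin n → ℝ => ∏ j, v j (y j))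
      (∑ j, (∏ l ∈ Finset.univ.erase j, v l (y l)) •
        ((ContinuousLinearMap.smulRight (1 : ℝ →L[ℝ] ℝ) (deriv (v j) (y j))).comp
          (ContinuousLinearMap.proj j))) y := by
  apply HasFDerivAt.finset_prod
  intro j _
  exact hasFDerivAt_coord n j (v j) (((hv j).differentiable (by simp)).differentiableAt)

lemma partialDeriv'_prod {n : ℕ} (v : Fin n → ℝ → ℝ)
    (hv : ∀ j, ContDiff ℝ ((⊤:ℕ∞)) (v j)) (i : Fin n) :
    partialDeriv' i (fun y => ∏ j, v j (y j))
      = fun y => ∏ j, Function.update v i (deriv (v i)) j (y j) := by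
  funext y
  have h := (hasFDerivAt_pi_prod v hv y).fderiv
  simp only [partialDeriv', h]
  rw [ContinuousLinearMap.sum_apply]
  have key : ∀ j : Fin n,
      ((∏ l ∈ Finset.univ.erase j, v l (y l)) •
        ((ContinuousLinearMap.smulRight (1 : ℝ →L[ℝ] ℝ) (deriv (v j) (y j))).comp
          (ContinuousLinearMap.proj j))) ((Pi.single i 1 : Fin n → ℝ))
      = (if i = j then (∏ l ∈ Finset.univ.erase j, v l (y l)) * deriv (v j) (y j) else 0) := by
    intro j
    simp [ContinuousLinearMap.smul_apply, ContinuousLinearMap.comp_apply,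
      ContinuousLinearMap.proj_apply, Pi.single_apply]
    rcases eq_or_ne i j with h'|h'
    · subst h'; simp
    · simp [h', Ne.symm h']
  rw [Finset.sum_congr rfl (fun j _ => key j),
    Finset.sum_ite_eq Finset.univ i (fun j => (∏ l ∈ Finset.univ.erase j, v l (y l)) * deriv (v j) (y j))]
  simp only [Finset.mem_univ, if_true]
  have : ∀ j, Function.update v i (deriv (v i)) j (y j)
      = Function.update (fun j => v j (y j)) i (deriv (v i) (y i)) j := by
    intro j
    rcases eq_or_ne j i with h'|h'
    · subst h'; simp
    · simp [Function.update_of_ne h']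
  rw [Finset.prod_congr rfl (fun j _ => this j),
    Finset.prod_update_of_mem (Finset.mem_univ i), mul_comm, Finset.erase_eq]

lemma update_smooth {n : ℕ} (v : Fin n → ℝ → ℝ) (hv : ∀ j, ContDiff ℝ ((⊤:ℕ∞)) (v j))
    (i : Fin n) (g : ℝ → ℝ) (hg : ContDiff ℝ ((⊤:ℕ∞)) g) (j : Fin n) :
    ContDiff ℝ ((⊤:ℕ∞)) (Function.update v i g j) := by
  rcases eq_or_ne j i with h|h
  · subst h; simpa using hg
  · simpa [Function.update_of_ne h] using hv j

lemma partialDeriv'_iterate {n : ℕ} (v : Fin n → ℝ → ℝ)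
    (hv : ∀ j, ContDiff ℝ ((⊤:ℕ∞)) (v j)) (i : Fin n) (M : ℕ) :
    (partialDeriv' i)^[M] (fun y => ∏ j, v j (y j))
      = fun y => ∏ j, Function.update v i (deriv^[M] (v i)) j (y j) := by
  induction M with
  | zero => simp [Function.update_eq_self]
  | succ M ih =>
    rw [Function.iterate_succ_apply', ih]
    set w := Function.update v i (deriv^[M] (v i)) with hw
    have hws : ∀ j, ContDiff ℝ ((⊤:ℕ∞)) (w j) :=
      update_smooth v hv i _ (ContDiff.iterate_deriv M (hv i))
    rw [partialDeriv'_prod w hws i]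
    funext y
    apply Finset.prod_congr rfl
    intro j _
    rw [hw, Function.update_idem, Function.update_self, Function.iterate_succ_apply' deriv M (v i)]

lemma foldr_prod {n : ℕ} (N : Fin n → ℕ) (L : List (Fin n)) (hL : L.Nodup)
    (v : Fin n → ℝ → ℝ) (hv : ∀ j, ContDiff ℝ ((⊤:ℕ∞)) (v j)) :
    L.foldr (fun i h => (partialDeriv' i)^[N i] h) (fun y => ∏ j, v j (y j))
      = fun y => ∏ j, (if j ∈ L then deriv^[N j] (v j) else v j) (y j) := by
  induction L with
  | nil => simp
  | cons a L ih =>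
    have ha : a ∉ L := (List.nodup_cons.mp hL).1
    have hN : L.Nodup := (List.nodup_cons.mp hL).2
    set w : Fin n → ℝ → ℝ := fun j => if j ∈ L then deriv^[N j] (v j) else v j with hwdef
    have hws : ∀ j, ContDiff ℝ ((⊤:ℕ∞)) (w j) := by
      intro j; rw [hwdef]; dsimp only
      split
      · exact ContDiff.iterate_deriv _ (hv j)
      · exact hv j
    rw [List.foldr_cons, ih hN, partialDeriv'_iterate w hws a (N a)]
    funext y
    apply Finset.prod_congr rfl
    intro j _
    rcases eq_or_ne j a with h|h
    · subst h
      rw [Function.update_self]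
      have hwa : w j = v j := by rw [hwdef]; simp [ha]
      simp [hwa, List.mem_cons]
    · rw [Function.update_of_ne h, hwdef]
      simp [List.mem_cons, h]

lemma multiIndexDeriv_gauss {n : ℕ} (k : ℝ) (N : Fin n → ℕ) :
    multiIndexDeriv N (fun y' => Real.exp (-(k * ∑ i, y' i ^ 2)))
      = fun y => ∏ j, uH k (N j) (y j) := by
  have h0 : (fun y' : Fin n → ℝ => Real.exp (-(k * ∑ i, y' i ^ 2)))
      = fun y => ∏ j, (fun x => Real.exp (-(k * x ^ 2))) (y j) := by
    funext y
    rw [← Real.exp_sum]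
    congr 1
    rw [Finset.mul_sum, ← Finset.sum_neg_distrib]
  rw [multiIndexDeriv, h0,
    foldr_prod N (List.finRange n) (List.nodup_finRange n) _ (fun _ => g0_smooth k)]
  funext y
  apply Finset.prod_congr rfl
  intro j _
  simp [List.mem_finRange, uH]

noncomputable def PhiC {n : ℕ} (a c : ℂ) (v : Fin n → ℝ → ℝ) : (Fin n → ℝ) × ℝ → ℂ :=
  fun p => c * ((∏ j, v j (p.1 j) : ℝ) : ℂ) * Complex.exp (a * p.2)

lemma hasDerivAt_cexp_lin (a : ℂ) (t : ℝ) :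
    HasDerivAt (fun s : ℝ => Complex.exp (a * s)) (a * Complex.exp (a * t)) t := by
  have hlin : HasDerivAt (fun s : ℝ => a * (s : ℂ)) a t := by
    simpa using (Complex.ofRealCLM.hasDerivAt (x := t)).const_mul a
  simpa [mul_comm] using hlin.cexp

lemma pderivY_PhiC {n : ℕ} (a c : ℂ) (v : Fin n → ℝ → ℝ)
    (hv : ∀ j, ContDiff ℝ ((⊤:ℕ∞)) (v j)) (i : Fin n) :
    pderivY i (PhiC a c v) = PhiC a c (Function.update v i (deriv (v i))) := by
  funext p
  obtain ⟨y, t⟩ := p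
  have hP : HasFDerivAt (fun y : Fin n → ℝ => ∏ j, v j (y j))
      (fderiv ℝ (fun y : Fin n → ℝ => ∏ j, v j (y j)) y) y :=
    (hasFDerivAt_pi_prod v hv y).differentiableAt.hasFDerivAt
  have h1 : HasFDerivAt (fun p : (Fin n → ℝ) × ℝ => ((∏ j, v j (p.1 j) : ℝ) : ℂ))
      ((Complex.ofRealCLM.comp (fderiv ℝ (fun y : Fin n → ℝ => ∏ j, v j (y j)) y)).comp
        (ContinuousLinearMap.fst ℝ (Fin n → ℝ) ℝ)) (y, t) :=
    ((Complex.ofRealCLM.hasFDerivAt.comp _ hP).comp (y, t) (hasFDerivAt_fst (𝕜 := ℝ)) :)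
  have h2 : HasFDerivAt (fun p : (Fin n → ℝ) × ℝ => Complex.exp (a * p.2))
      ((ContinuousLinearMap.smulRight (1 : ℝ →L[ℝ] ℝ) (a * Complex.exp (a * t))).comp
        (ContinuousLinearMap.snd ℝ (Fin n → ℝ) ℝ)) (y, t) :=
    (hasDerivAt_cexp_lin a t).hasFDerivAt.comp (g := fun s : ℝ => Complex.exp (a * s)) (y, t) hasFDerivAt_snd
  have H : HasFDerivAt (fun p : (Fin n → ℝ) × ℝ =>
      (c * ((∏ j, v j (p.1 j) : ℝ) : ℂ)) * Complex.exp (a * p.2)) _ (y, t) := (h1.const_mul c).mul h2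
  have hD1 : fderiv ℝ (fun y : Fin n → ℝ => ∏ j, v j (y j)) y ((Pi.single i 1 : Fin n → ℝ))
      = ∏ j, Function.update v i (deriv (v i)) j (y j) :=
    congrFun (partialDeriv'_prod v hv i) y
  have hval : pderivY i (PhiC a c v) (y, t)
      = fderiv ℝ (PhiC a c v) (y, t) ((Pi.single i 1 : Fin n → ℝ), (0 : ℝ)) := rfl
  rw [hval]
  have hfun : PhiC a c v
      = fun p : (Fin n → ℝ) × ℝ =>
          (c * ((∏ j, v j (p.1 j) : ℝ) : ℂ)) * Complex.exp (a * p.2) := by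
    funext p; simp [PhiC, mul_assoc]
  rw [hfun, H.fderiv]
  simp only [ContinuousLinearMap.add_apply, ContinuousLinearMap.smul_apply,
    ContinuousLinearMap.comp_apply, ContinuousLinearMap.smulRight_apply,
    ContinuousLinearMap.one_apply, ContinuousLinearMap.coe_fst',
    ContinuousLinearMap.coe_snd', Complex.ofRealCLM_apply, hD1]
  simp [PhiC, smul_eq_mul]
  ring

lemma pderivT_PhiC {n : ℕ} (a c : ℂ) (v : Fin n → ℝ → ℝ)
    (hv : ∀ j, ContDiff ℝ ((⊤:ℕ∞)) (v j)) :
    pderivT (PhiC a c v) = PhiC a (c * a) v := by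
  funext p
  obtain ⟨y, t⟩ := p
  have hP : HasFDerivAt (fun y : Fin n → ℝ => ∏ j, v j (y j))
      (fderiv ℝ (fun y : Fin n → ℝ => ∏ j, v j (y j)) y) y :=
    (hasFDerivAt_pi_prod v hv y).differentiableAt.hasFDerivAt
  have h1 : HasFDerivAt (fun p : (Fin n → ℝ) × ℝ => ((∏ j, v j (p.1 j) : ℝ) : ℂ))
      ((Complex.ofRealCLM.comp (fderiv ℝ (fun y : Fin n → ℝ => ∏ j, v j (y j)) y)).comp
        (ContinuousLinearMap.fst ℝ (Fin n → ℝ) ℝ)) (y, t) :=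
    ((Complex.ofRealCLM.hasFDerivAt.comp _ hP).comp (y, t) (hasFDerivAt_fst (𝕜 := ℝ)) :)
  have h2 : HasFDerivAt (fun p : (Fin n → ℝ) × ℝ => Complex.exp (a * p.2))
      ((ContinuousLinearMap.smulRight (1 : ℝ →L[ℝ] ℝ) (a * Complex.exp (a * t))).comp
        (ContinuousLinearMap.snd ℝ (Fin n → ℝ) ℝ)) (y, t) :=
    (hasDerivAt_cexp_lin a t).hasFDerivAt.comp (g := fun s : ℝ => Complex.exp (a * s)) (y, t) hasFDerivAt_snd
  have H : HasFDerivAt (fun p : (Fin n → ℝ) × ℝ =>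
      (c * ((∏ j, v j (p.1 j) : ℝ) : ℂ)) * Complex.exp (a * p.2)) _ (y, t) := (h1.const_mul c).mul h2
  have hval : pderivT (PhiC a c v) (y, t)
      = fderiv ℝ (PhiC a c v) (y, t) ((0 : Fin n → ℝ), (1 : ℝ)) := rfl
  rw [hval]
  have hfun : PhiC a c v
      = fun p : (Fin n → ℝ) × ℝ =>
          (c * ((∏ j, v j (p.1 j) : ℝ) : ℂ)) * Complex.exp (a * p.2) := by
    funext p; simp [PhiC, mul_assoc]
  rw [hfun, H.fderiv]
  simp only [ContinuousLinearMap.add_apply, ContinuousLinearMap.smul_apply,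
    ContinuousLinearMap.comp_apply, ContinuousLinearMap.smulRight_apply,
    ContinuousLinearMap.one_apply, ContinuousLinearMap.coe_fst',
    ContinuousLinearMap.coe_snd', Complex.ofRealCLM_apply, map_zero]
  simp [PhiC, smul_eq_mul]
  ring

lemma prod_update_eval {n : ℕ} (v : Fin n → ℝ → ℝ) (i : Fin n) (g : ℝ → ℝ)
    (y : Fin n → ℝ) (c : ℝ) (hgi : g (y i) = c * v i (y i)) :
    ∏ j, Function.update v i g j (y j) = c * ∏ j, v j (y j) := by
  have h1 : ∀ j, Function.update v i g j (y j)
      = Function.update (fun j => v j (y j)) i (g (y i)) j := by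
    intro j
    rcases eq_or_ne j i with h|h
    · subst h; simp
    · simp [Function.update_of_ne h]
  rw [Finset.prod_congr rfl (fun j _ => h1 j),
    Finset.prod_update_of_mem (Finset.mem_univ i), hgi,
    mul_assoc]
  congr 1
  rw [← Finset.erase_eq, Finset.mul_prod_erase Finset.univ (fun j => v j (y j)) (Finset.mem_univ i)]

/-- Let `m, l` be positive integers, `k := m·l`, `σ > 0`, `n ≥ 1`, and `N` a
multi-index with `|N| = N_1 + ⋯ + N_n`.  Define
`f(y,t) := e^{k‖y‖²/2}·((∂/∂y)^N e^{−k‖y‖²})(y)·e^{−√(−1)·l·t}`.  Then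
`−Σ_i ∂²f/∂y_i² − (m²(1+σ‖y‖²)/σ)·∂²f/∂t² = (k²/σ + kn + 2k|N|)·f` pointwise. -/
theorem hermite_eigenfunction_on_limit_space
    {n : ℕ} (hn : 1 ≤ n) (m l : ℕ) (hm : 0 < m) (hl : 0 < l) (k : ℕ) (hk : k = m * l)
    (σ : ℝ) (hσ : 0 < σ) (N : Fin n → ℕ)
    (f : (Fin n → ℝ) × ℝ → ℂ)
    (hf : f = fun p =>
      ((Real.exp ((k : ℝ) * (∑ i, p.1 i ^ 2) / 2)
        * multiIndexDeriv N (fun y' => Real.exp (-((k : ℝ) * ∑ i, y' i ^ 2))) p.1 : ℝ) : ℂ)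
      * Complex.exp (-Complex.I * (l : ℂ) * (p.2 : ℂ))) :
    ∀ (y : Fin n → ℝ) (t : ℝ),
      -(∑ i, pderivY i (pderivY i f) (y, t))
        - ((((m : ℝ) ^ 2 * (1 + σ * ∑ i, y i ^ 2) / σ : ℝ)) : ℂ)
            * pderivT (pderivT f) (y, t)
      = ((((k : ℝ) ^ 2 / σ + (k : ℝ) * (n : ℝ)
            + 2 * (k : ℝ) * (∑ i, (N i : ℝ)) : ℝ)) : ℂ) * f (y, t) := by
  intro y t
  set kr : ℝ := (k : ℝ) with hkr
  set v : Fin n → ℝ → ℝ := fun j => phiH kr (N j) with hvdef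
  have hv : ∀ j, ContDiff ℝ ((⊤:ℕ∞)) (v j) := fun j => phiH_smooth kr (N j)
  set a : ℂ := -Complex.I * (l : ℂ) with ha
  have hfPhi : f = PhiC a 1 v := by
    rw [hf]; funext p
    simp only [PhiC, one_mul]
    rw [multiIndexDeriv_gauss kr N]
    congr 2
    rw [show kr * (∑ i, p.1 i ^ 2) / 2 = ∑ i, kr * p.1 i ^ 2 / 2 by
      rw [← Finset.sum_div, ← Finset.mul_sum], Real.exp_sum, ← Finset.prod_mul_distrib]
    apply Finset.prod_congr rfl
    intro j _
    rfl
  have hder2 : ∀ i : Fin n, deriv (deriv (v i)) (y i)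
      = (kr ^ 2 * y i ^ 2 - kr * (2 * (N i : ℝ) + 1)) * v i (y i) := by
    intro i
    rw [hvdef]
    exact phiH_deriv2 kr (N i) (y i)
  have hY : ∀ i : Fin n, pderivY i (pderivY i f) (y, t)
      = (((kr ^ 2 * y i ^ 2 - kr * (2 * (N i : ℝ) + 1)) : ℝ) : ℂ) * f (y, t) := by
    intro i
    have hw : ∀ j, ContDiff ℝ ((⊤:ℕ∞)) (Function.update v i (deriv (v i)) j) := by
      apply update_smooth v hv i
      simpa using ContDiff.iterate_deriv 1 (hv i)
    rw [hfPhi, pderivY_PhiC a 1 v hv i, pderivY_PhiC a 1 _ hw i]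
    have hupd : Function.update (Function.update v i (deriv (v i))) i
        (deriv (Function.update v i (deriv (v i)) i))
        = Function.update v i (deriv (deriv (v i))) := by
      rw [Function.update_self, Function.update_idem]
    rw [hupd]
    simp only [PhiC, one_mul]
    rw [prod_update_eval v i (deriv (deriv (v i))) y _ (hder2 i)]
    push_cast
    ring
  have hT : pderivT (pderivT f) (y, t) = -(l : ℂ) ^ 2 * f (y, t) := by
    rw [hfPhi, pderivT_PhiC a 1 v hv, pderivT_PhiC a (1 * a) v hv]
    simp only [PhiC, one_mul, ha]
    ring_nf
    rw [Complex.I_sq]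
    ring
  have hsum : ∑ i, pderivY i (pderivY i f) (y, t)
      = (((∑ i, (kr ^ 2 * y i ^ 2 - kr * (2 * (N i : ℝ) + 1))) : ℝ) : ℂ) * f (y, t) := by
    rw [Finset.sum_congr rfl (fun i _ => hY i), ← Finset.sum_mul]
    norm_cast
  rw [hsum, hT]
  have hR : (∑ i, (kr ^ 2 * y i ^ 2 - kr * (2 * (N i : ℝ) + 1)))
      = kr ^ 2 * (∑ i, y i ^ 2) - (2 * kr * (∑ i, (N i : ℝ)) + kr * n) := by
    rw [Finset.sum_sub_distrib, ← Finset.mul_sum]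
    congr 1
    rw [show (∑ i, kr * (2 * (N i : ℝ) + 1)) = ∑ i, (2 * kr * (N i : ℝ) + kr) by
      apply Finset.sum_congr rfl; intro i _; ring]
    rw [Finset.sum_add_distrib, ← Finset.mul_sum, Finset.sum_const, Finset.card_univ]
    simp [mul_comm]
  have hklr : kr = (m : ℝ) * (l : ℝ) := by rw [hkr, hk]; push_cast; ring
  have key : (-(((∑ i, (kr ^ 2 * y i ^ 2 - kr * (2 * (N i : ℝ) + 1))) : ℝ) : ℂ))
      - ((((m : ℝ) ^ 2 * (1 + σ * ∑ i, y i ^ 2) / σ : ℝ)) : ℂ) * (-(l : ℂ) ^ 2)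
      = ((((k : ℝ) ^ 2 / σ + (k : ℝ) * (n : ℝ) + 2 * (k : ℝ) * (∑ i, (N i : ℝ)) : ℝ)) : ℂ) := by
    rw [hR]
    have : -(kr ^ 2 * (∑ i, y i ^ 2) - (2 * kr * (∑ i, (N i : ℝ)) + kr * n))
        - ((m : ℝ) ^ 2 * (1 + σ * ∑ i, y i ^ 2) / σ) * (-(l : ℝ) ^ 2)
        = ((k : ℝ) ^ 2 / σ + (k : ℝ) * (n : ℝ) + 2 * (k : ℝ) * (∑ i, (N i : ℝ))) := by
      rw [← hkr, hklr]
      field_simp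
      ring
    calc _ = ((-(kr ^ 2 * (∑ i, y i ^ 2) - (2 * kr * (∑ i, (N i : ℝ)) + kr * n))
        - ((m : ℝ) ^ 2 * (1 + σ * ∑ i, y i ^ 2) / σ) * (-(l : ℝ) ^ 2) : ℝ) : ℂ) := by
          push_cast; ring
      _ = _ := by rw [this]
  calc -((((∑ i, (kr ^ 2 * y i ^ 2 - kr * (2 * (N i : ℝ) + 1))) : ℝ) : ℂ) * f (y, t))
        - ((((m : ℝ) ^ 2 * (1 + σ * ∑ i, y i ^ 2) / σ : ℝ)) : ℂ) * (-(l : ℂ) ^ 2 * f (y, t))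
      = ((-(((∑ i, (kr ^ 2 * y i ^ 2 - kr * (2 * (N i : ℝ) + 1))) : ℝ) : ℂ))
          - ((((m : ℝ) ^ 2 * (1 + σ * ∑ i, y i ^ 2) / σ : ℝ)) : ℂ) * (-(l : ℂ) ^ 2)) * f (y, t) := by
        ring
    _ = _ := by rw [key]
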